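/- Assume: (i) the SBP property Q + Qᵀ = V_fᵀ B V_f, (ii) Q 1 = 0 and t_Lᵀ1 = t_Rᵀ1 = 1, and (iii) the entropy setup with f_S symmetric and entropy conservative, and v a bijection with inverse u(·). Let S_h, B_h, Q_h = S_h + (1/2)B_h, I_h, W_h, ṽ, ũ, and F_S be as in the two-element decoupled formulation, and let f*_L, f*_R ∈ ℝ^m be boundary numerical fluxes. Suppose u_h(t) = (u¹(t), u²(t)) is differentiable in t and satisfies, componentwise, W_h (d u_h/dt) + 2 I_hᵀ (S_h ∘ F_S) 1 + I_hᵀ B_h g = 0, where g ∈ (ℝ^m)^{2(N+3)} is zero at all volume-node slots, equals f*_L at the element-1 left-face slot, f*_R at the element-2 right-face slot, and is zero at the remaining face slots. If the boundary fluxes are entropy stable with respect to the outward normals n_L = -1 and n_R = +1, i.e., v_L·f*_L - ψ(ũ_L) ≤ 0 and v_R·f*_R - ψ(ũ_R) ≥ 0, where v_L = Σ_j (t_L)_j v(u¹_j), v_R = Σ_j (t_R)_j v(u²_j), ũ_L = u(v_L), ũ_R = u(v_R), then the total entropy is nonincreasing: d/dt [ Σ_{k=1,2} Σ_{i=1}^{N+1}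 w_i S(u^k_i(t)) ] ≤ 0 for all t. -/

import Mathlib

open Matrix BigOperators

/-- Chain rule for the entropy along a differentiable curve. -/
lemma entropy_hasDerivAt_aux {m : ℕ} (Sfun : (Fin m → ℝ) → ℝ) (v : (Fin m → ℝ) → Fin m → ℝ)
    (hgrad : ∀ y : Fin m → ℝ,
      HasFDerivAt Sfun (∑ c, v y c • (ContinuousLinearMap.proj c : (Fin m → ℝ) →L[ℝ] ℝ)) y)
    (u : ℝ → Fin m → ℝ) (hd : ∀ c, Differentiable ℝ (fun t => u t c)) (t : ℝ) :
    HasDerivAt (fun s => Sfun (u s)) (∑ c, v (u t) c * deriv (fun s => u s c) t) t := by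
  have hU : HasDerivAt u (fun c => deriv (fun s => u s c) t) t :=
    hasDerivAt_pi.2 fun c => ((hd c) t).hasDerivAt
  have h := (hgrad (u t)).comp_hasDerivAt t hU
  simpa [Function.comp_def, ContinuousLinearMap.sum_apply] using h

/-- Summation-by-parts style sum exchange. -/
lemma swap_helper_aux {α β γ : Type*} [Fintype α] [Fintype β] [Fintype γ]
    (A : α → β → ℝ) (X : β → γ → ℝ) (F : α → γ → ℝ) :
    (∑ k : β, ∑ c : γ, X k c * (∑ a : α, A a k * F a c))
      = ∑ a : α, ∑ c : γ, (∑ k : β, A a k * X k c) * F a c := by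
  simp only [Finset.mul_sum, Finset.sum_mul]
  rw [Finset.sum_comm]
  conv_lhs => enter [2]; ext c; rw [Finset.sum_comm]
  rw [Finset.sum_comm]
  exact Finset.sum_congr rfl fun a _ => Finset.sum_congr rfl fun c _ =>
    Finset.sum_congr rfl fun k _ => by ring

lemma swap2_aux {β γ : Type*} [Fintype β] [Fintype γ]
    (X : γ → ℝ) (Sr : β → ℝ) (F : β → γ → ℝ) :
    ∑ c : γ, X c * ∑ b : β, Sr b * F b c = ∑ b : β, Sr b * ∑ c : γ, X c * F b c := by
  simp only [Finset.mul_sum]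
  rw [Finset.sum_comm]
  exact Finset.sum_congr rfl fun b _ => Finset.sum_congr rfl fun c _ => by ring

/-- **Semi-discrete entropy inequality with weakly imposed boundary conditions.** If the
two-element decoupled scheme is augmented with boundary numerical fluxes `f*_L, f*_R`
satisfying the entropy stability conditions `v_L·f*_L - ψ(ũ_L) ≤ 0` and
`v_R·f*_R - ψ(ũ_R) ≥ 0`, then the total entropy is nonincreasing. -/
theorem two_element_decoupled_entropy_inequality_bc
    (N m : ℕ) (hm : 1 ≤ m)
    (w : Fin (N + 1) → ℝ)
    (Q : Matrix (Fin (N + 1)) (Fin (N + 1)) ℝ)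
    (Vf : Matrix (Fin 2) (Fin (N + 1)) ℝ)
    (B : Matrix (Fin 2) (Fin 2) ℝ)
    (hB : B = Matrix.diagonal ![(-1 : ℝ), 1])
    -- (i) the SBP property
    (hSBP : Q + Qᵀ = Vfᵀ * B * Vf)
    -- (ii) row sums
    (hQ1 : Q *ᵥ (fun _ => (1 : ℝ)) = 0)
    (htL1 : ∑ j, Vf 0 j = 1) (htR1 : ∑ j, Vf 1 j = 1)
    (eL eR : Fin 2 → ℝ) (heL : eL = ![1, 0]) (heR : eR = ![0, 1])
    (S : Matrix (Fin (N + 1)) (Fin (N + 1)) ℝ)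
    (hS : S = Q - (1 / 2 : ℝ) • (Vfᵀ * B * Vf))
    -- two-element decoupled matrices
    (Sh Bh Qh : Matrix ((Fin (N + 1) ⊕ Fin 2) ⊕ (Fin (N + 1) ⊕ Fin 2))
                       ((Fin (N + 1) ⊕ Fin 2) ⊕ (Fin (N + 1) ⊕ Fin 2)) ℝ)
    (hSh : Sh = Matrix.fromBlocks
      (Matrix.fromBlocks S ((1 / 2 : ℝ) • (Vfᵀ * B)) (-((1 / 2 : ℝ) • (B * Vf))) 0)
      (Matrix.fromBlocks 0 0 0 ((1 / 2 : ℝ) • Matrix.vecMulVec eR eL))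
      (Matrix.fromBlocks 0 0 0 (-((1 / 2 : ℝ) • Matrix.vecMulVec eL eR)))
      (Matrix.fromBlocks S ((1 / 2 : ℝ) • (Vfᵀ * B)) (-((1 / 2 : ℝ) • (B * Vf))) 0))
    (hBh : Bh = Matrix.fromBlocks
      (Matrix.fromBlocks 0 0 0 (-(Matrix.vecMulVec eL eL))) 0
      0 (Matrix.fromBlocks 0 0 0 (Matrix.vecMulVec eR eR)))
    (hQh : Qh = Sh + (1 / 2 : ℝ) • Bh)
    (Ih : Matrix ((Fin (N + 1) ⊕ Fin 2) ⊕ (Fin (N + 1) ⊕ Fin 2))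
                 (Fin (N + 1) ⊕ Fin (N + 1)) ℝ)
    (hIh : Ih = Matrix.fromBlocks
      (Matrix.fromRows (1 : Matrix (Fin (N + 1)) (Fin (N + 1)) ℝ) Vf) 0
      0 (Matrix.fromRows (1 : Matrix (Fin (N + 1)) (Fin (N + 1)) ℝ) Vf))
    -- (iii) the entropy setup
    (Sfun : (Fin m → ℝ) → ℝ) (v uu : (Fin m → ℝ) → Fin m → ℝ)
    (ψ : (Fin m → ℝ) → ℝ) (fS : (Fin m → ℝ) → (Fin m → ℝ) → Fin m → ℝ)
    (hgrad : ∀ y : Fin m → ℝ,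
      HasFDerivAt Sfun (∑ c, v y c • (ContinuousLinearMap.proj c : (Fin m → ℝ) →L[ℝ] ℝ)) y)
    (huv : Function.LeftInverse uu v) (hvu : Function.RightInverse uu v)
    (hsym : ∀ a b, fS a b = fS b a)
    (hec : ∀ a b, (v a - v b) ⬝ᵥ fS a b = ψ a - ψ b)
    -- boundary numerical fluxes and boundary data vector
    (fstarL fstarR : Fin m → ℝ)
    (g : ((Fin (N + 1) ⊕ Fin 2) ⊕ (Fin (N + 1) ⊕ Fin 2)) → Fin m → ℝ)
    (hg : g = Sum.elim
      (Sum.elim (fun _ => 0) (fun a => if a = 0 then fstarL else 0))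
      (Sum.elim (fun _ => 0) (fun a => if a = 1 then fstarR else 0)))
    -- the semi-discrete solution and formulation
    (u1 u2 : ℝ → Fin (N + 1) → Fin m → ℝ)
    (hd1 : ∀ i c, Differentiable ℝ (fun t => u1 t i c))
    (hd2 : ∀ i c, Differentiable ℝ (fun t => u2 t i c))
    (vtil util : ℝ → ((Fin (N + 1) ⊕ Fin 2) ⊕ (Fin (N + 1) ⊕ Fin 2)) → Fin m → ℝ)
    (hvtil : ∀ t k c, vtil t k c
      = ∑ j, Ih k j * Sum.elim (fun i => v (u1 t i)) (fun i => v (u2 t i)) j c)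
    (hutil : ∀ t k, util t k = uu (vtil t k))
    (hform : ∀ (t : ℝ) (k : Fin (N + 1) ⊕ Fin (N + 1)) (c : Fin m),
      Sum.elim w w k
          * deriv (fun s => Sum.elim (fun i => u1 s i c) (fun i => u2 s i c) k) t
        + 2 * (∑ a, Ih a k * ∑ b, Sh a b * fS (util t a) (util t b) c)
        + (∑ a, Ih a k * ∑ b, Bh a b * g b c) = 0)
    -- entropy stable boundary fluxes (outward normals n_L = -1, n_R = +1)
    (hbcL : ∀ t : ℝ,
      ((fun c => ∑ j, Vf 0 j * v (u1 t j) c) ⬝ᵥ fstarL)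
        - ψ (uu fun c => ∑ j, Vf 0 j * v (u1 t j) c) ≤ 0)
    (hbcR : ∀ t : ℝ,
      0 ≤ ((fun c => ∑ j, Vf 1 j * v (u2 t j) c) ⬝ᵥ fstarR)
        - ψ (uu fun c => ∑ j, Vf 1 j * v (u2 t j) c)) :
    ∀ t : ℝ,
      deriv (fun s => (∑ i, w i * Sfun (u1 s i)) + ∑ i, w i * Sfun (u2 s i)) t ≤ 0 := by
  intro t
  -- ## basic scalar facts
  have hQrow : ∀ i, (∑ j, Q i j) = 0 := by
    intro i
    have h := congrFun hQ1 i
    simpa [Matrix.mulVec, dotProduct] using h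
  have hVf1 : ∀ f : Fin 2, (∑ j, Vf f j) = 1 := by
    intro f
    fin_cases f
    · exact htL1
    · exact htR1
  have hBt : Bᵀ = B := by rw [hB]; exact Matrix.diagonal_transpose _
  have hBsym : ∀ x y, B x y = B y x := fun x y => by
    conv_lhs => rw [← hBt, Matrix.transpose_apply]
  have hB00 : B 0 0 = -1 := by simp [hB]
  have hB11 : B 1 1 = 1 := by simp [hB]
  have hB01 : B 0 1 = 0 := by
    rw [hB]; exact Matrix.diagonal_apply_ne _ (by decide)
  have hB10 : B 1 0 = 0 := by
    rw [hB]; exact Matrix.diagonal_apply_ne _ (by decide)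
  have hVB : ∀ i f, (Vfᵀ * B) i f = ∑ x, Vf x i * B x f := by
    intro i f; simp [Matrix.mul_apply]
  have hBV : ∀ f i, (B * Vf) f i = ∑ x, B f x * Vf x i := by
    intro f i; simp [Matrix.mul_apply]
  have hVBV : ∀ i j, (Vfᵀ * B * Vf) i j = ∑ f, (Vfᵀ * B) i f * Vf f j := by
    intro i j; simp [Matrix.mul_apply]
  -- ## S is skew
  have hMt : (Vfᵀ * B * Vf)ᵀ = Vfᵀ * B * Vf := by
    rw [Matrix.transpose_mul, Matrix.transpose_mul, Matrix.transpose_transpose, hBt,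
        ← Matrix.mul_assoc]
  have hS0 : ∀ i j, S i j + S j i = 0 := by
    intro i j
    have h1 : S + Sᵀ = 0 := by
      rw [hS, Matrix.transpose_sub, Matrix.transpose_smul, hMt]
      have h2 : Q - (1 / 2 : ℝ) • (Vfᵀ * B * Vf) + (Qᵀ - (1 / 2 : ℝ) • (Vfᵀ * B * Vf))
          = (Q + Qᵀ) - ((1 / 2 : ℝ) • (Vfᵀ * B * Vf) + (1 / 2 : ℝ) • (Vfᵀ * B * Vf)) := by
        abel
      rw [h2, hSBP, ← add_smul]
      norm_num
    have h3 := congrFun (congrFun h1 i) j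
    simpa [Matrix.add_apply, Matrix.transpose_apply] using h3
  -- ## Sh is skew
  have hskew : ∀ a b, Sh b a = -Sh a b := by
    intro a b
    rcases a with (i | f) | (i | f) <;> rcases b with (i' | f') | (i' | f') <;>
      simp only [hSh, Matrix.fromBlocks_apply₁₁, Matrix.fromBlocks_apply₁₂,
        Matrix.fromBlocks_apply₂₁, Matrix.fromBlocks_apply₂₂, Matrix.neg_apply,
        Matrix.smul_apply, Matrix.zero_apply, Matrix.vecMulVec_apply, smul_eq_mul, neg_zero,
        neg_neg]
    · linarith [hS0 i i']
    · rw [hBV, hVB]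
      rw [show (∑ x, B f' x * Vf x i) = ∑ x, Vf x i * B x f' from
        Finset.sum_congr rfl fun x _ => by rw [hBsym]; ring]
    · rw [hBV, hVB]
      rw [show (∑ x, B f x * Vf x i') = ∑ x, Vf x i' * B x f from
        Finset.sum_congr rfl fun x _ => by rw [hBsym]; ring]
    · ring
    · linarith [hS0 i i']
    · rw [hBV, hVB]
      rw [show (∑ x, B f' x * Vf x i) = ∑ x, Vf x i * B x f' from
        Finset.sum_congr rfl fun x _ => by rw [hBsym]; ring]
    · ring
    · rw [hBV, hVB]
      rw [show (∑ x, B f x * Vf x i') = ∑ x, Vf x i' * B x f from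
        Finset.sum_congr rfl fun x _ => by rw [hBsym]; ring]
  -- ## row sums of Sh
  have hSrow : ∀ i, (∑ j, S i j) = -(1 / 2) * ∑ f, (Vfᵀ * B) i f := by
    intro i
    have h1 : ∑ j, (Vfᵀ * B * Vf) i j = ∑ f, (Vfᵀ * B) i f := by
      calc ∑ j, (Vfᵀ * B * Vf) i j = ∑ j, ∑ f, (Vfᵀ * B) i f * Vf f j :=
            Finset.sum_congr rfl fun j _ => hVBV i j
        _ = ∑ f, ∑ j, (Vfᵀ * B) i f * Vf f j := Finset.sum_comm
        _ = ∑ f, (Vfᵀ * B) i f * ∑ j, Vf f j :=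
            Finset.sum_congr rfl fun f _ => (Finset.mul_sum _ _ _).symm
        _ = ∑ f, (Vfᵀ * B) i f := by simp [hVf1]
    calc ∑ j, S i j = ∑ j, (Q i j - 1 / 2 * (Vfᵀ * B * Vf) i j) := by
          refine Finset.sum_congr rfl fun j _ => ?_
          rw [hS]
          simp [Matrix.sub_apply, Matrix.smul_apply]
      _ = (∑ j, Q i j) - 1 / 2 * ∑ j, (Vfᵀ * B * Vf) i j := by
          rw [Finset.sum_sub_distrib, Finset.mul_sum]
      _ = -(1 / 2) * ∑ f, (Vfᵀ * B) i f := by rw [hQrow, h1]; ring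
  have hBVsum : ∀ f, (∑ j, (B * Vf) f j) = B f 0 + B f 1 := by
    intro f
    calc ∑ j, (B * Vf) f j = ∑ j, ∑ x, B f x * Vf x j :=
          Finset.sum_congr rfl fun j _ => hBV f j
      _ = ∑ x, ∑ j, B f x * Vf x j := Finset.sum_comm
      _ = ∑ x, B f x * ∑ j, Vf x j :=
          Finset.sum_congr rfl fun x _ => (Finset.mul_sum _ _ _).symm
      _ = ∑ x : Fin 2, B f x := by simp [hVf1]
      _ = B f 0 + B f 1 := Fin.sum_univ_two _
  have hrow1 : ∀ i, (∑ b, Sh (Sum.inl (Sum.inl i)) b) = 0 := by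
    intro i
    simp only [hSh, Fintype.sum_sum_type, Matrix.fromBlocks_apply₁₁,
      Matrix.fromBlocks_apply₁₂, Matrix.fromBlocks_apply₂₁, Matrix.fromBlocks_apply₂₂,
      Matrix.zero_apply, Matrix.smul_apply, smul_eq_mul, Finset.sum_const_zero, add_zero]
    rw [hSrow i, ← Finset.mul_sum]
    ring
  have hrow3 : ∀ i, (∑ b, Sh (Sum.inr (Sum.inl i)) b) = 0 := by
    intro i
    simp only [hSh, Fintype.sum_sum_type, Matrix.fromBlocks_apply₁₁,
      Matrix.fromBlocks_apply₁₂, Matrix.fromBlocks_apply₂₁, Matrix.fromBlocks_apply₂₂,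
      Matrix.zero_apply, Matrix.smul_apply, smul_eq_mul, Finset.sum_const_zero, add_zero,
      zero_add]
    rw [hSrow i, ← Finset.mul_sum]
    ring
  have hrow2 : ∀ f, (∑ b, Sh (Sum.inl (Sum.inr f)) b) = 1 / 2 * eL f := by
    intro f
    simp only [hSh, Fintype.sum_sum_type, Matrix.fromBlocks_apply₁₁,
      Matrix.fromBlocks_apply₁₂, Matrix.fromBlocks_apply₂₁, Matrix.fromBlocks_apply₂₂,
      Matrix.zero_apply, Matrix.smul_apply, smul_eq_mul, Matrix.neg_apply,
      Matrix.vecMulVec_apply, Finset.sum_const_zero, add_zero, zero_add]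
    rw [show (∑ j, -(1 / 2 * (B * Vf) f j)) = -(1 / 2 * ∑ j, (B * Vf) f j) by
      rw [Finset.sum_neg_distrib, ← Finset.mul_sum]]
    rw [hBVsum f, Fin.sum_univ_two]
    fin_cases f <;> simp [heL, heR, hB00, hB01, hB10, hB11] <;> norm_num
  have hrow4 : ∀ f, (∑ b, Sh (Sum.inr (Sum.inr f)) b) = -(1 / 2) * eR f := by
    intro f
    simp only [hSh, Fintype.sum_sum_type, Matrix.fromBlocks_apply₁₁,
      Matrix.fromBlocks_apply₁₂, Matrix.fromBlocks_apply₂₁, Matrix.fromBlocks_apply₂₂,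
      Matrix.zero_apply, Matrix.smul_apply, smul_eq_mul, Matrix.neg_apply,
      Matrix.vecMulVec_apply, Finset.sum_const_zero, add_zero, zero_add]
    rw [show (∑ j, -(1 / 2 * (B * Vf) f j)) = -(1 / 2 * ∑ j, (B * Vf) f j) by
      rw [Finset.sum_neg_distrib, ← Finset.mul_sum]]
    rw [hBVsum f, Fin.sum_univ_two]
    fin_cases f <;> simp [heL, heR, hB00, hB01, hB10, hB11] <;> norm_num
  -- ## the entropy time derivative
  have hE : HasDerivAt (fun s => (∑ i, w i * Sfun (u1 s i)) + ∑ i, w i * Sfun (u2 s i))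
      ((∑ i, w i * ∑ c, v (u1 t i) c * deriv (fun s => u1 s i c) t)
        + ∑ i, w i * ∑ c, v (u2 t i) c * deriv (fun s => u2 s i c) t) t := by
    apply HasDerivAt.add
    · convert HasDerivAt.sum (fun i (_ : i ∈ Finset.univ) => HasDerivAt.const_mul (w i)
        (entropy_hasDerivAt_aux Sfun v hgrad (fun s => u1 s i) (fun c => hd1 i c) t)) using 1
      ext s; simp [Finset.sum_apply]
    · convert HasDerivAt.sum (fun i (_ : i ∈ Finset.univ) => HasDerivAt.const_mul (w i)
        (entropy_hasDerivAt_aux Sfun v hgrad (fun s => u2 s i) (fun c => hd2 i c) t)) using 1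
      ext s; simp [Finset.sum_apply]
  rw [hE.deriv]
  -- ## step 1 : rewrite the derivative as a sum over all nodes
  have hDsplit : (∑ i, w i * ∑ c, v (u1 t i) c * deriv (fun s => u1 s i c) t)
        + (∑ i, w i * ∑ c, v (u2 t i) c * deriv (fun s => u2 s i c) t)
      = ∑ k : Fin (N + 1) ⊕ Fin (N + 1), ∑ c,
          (Sum.elim (fun i => v (u1 t i)) (fun i => v (u2 t i)) k c)
            * (Sum.elim w w k
                * deriv (fun s => Sum.elim (fun i => u1 s i c) (fun i => u2 s i c) k) t) := by
    rw [Fintype.sum_sum_type]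
    simp only [Sum.elim_inl, Sum.elim_inr]
    congr 1 <;>
      exact Finset.sum_congr rfl fun i _ => by
        rw [Finset.mul_sum]
        exact Finset.sum_congr rfl fun c _ => by ring
  rw [hDsplit]
  -- ## step 2 : substitute the scheme
  have hwdu : ∀ (k : Fin (N + 1) ⊕ Fin (N + 1)) (c : Fin m),
      Sum.elim w w k * deriv (fun s => Sum.elim (fun i => u1 s i c) (fun i => u2 s i c) k) t
      = -(2 * (∑ a, Ih a k * ∑ b, Sh a b * fS (util t a) (util t b) c)
          + (∑ a, Ih a k * ∑ b, Bh a b * g b c)) := by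
    intro k c
    have h := hform t k c
    linarith
  have hstep2 : (∑ k : Fin (N + 1) ⊕ Fin (N + 1), ∑ c,
          (Sum.elim (fun i => v (u1 t i)) (fun i => v (u2 t i)) k c)
            * (Sum.elim w w k
                * deriv (fun s => Sum.elim (fun i => u1 s i c) (fun i => u2 s i c) k) t))
      = -(2 * (∑ k : Fin (N + 1) ⊕ Fin (N + 1), ∑ c,
              (Sum.elim (fun i => v (u1 t i)) (fun i => v (u2 t i)) k c)
                * (∑ a, Ih a k * ∑ b, Sh a b * fS (util t a) (util t b) c))
          + (∑ k : Fin (N + 1) ⊕ Fin (N + 1), ∑ c,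
              (Sum.elim (fun i => v (u1 t i)) (fun i => v (u2 t i)) k c)
                * (∑ a, Ih a k * ∑ b, Bh a b * g b c))) := by
    have h1 : ∀ (k : Fin (N + 1) ⊕ Fin (N + 1)) (c : Fin m),
        (Sum.elim (fun i => v (u1 t i)) (fun i => v (u2 t i)) k c)
            * (Sum.elim w w k
                * deriv (fun s => Sum.elim (fun i => u1 s i c) (fun i => u2 s i c) k) t)
        = -(2 * ((Sum.elim (fun i => v (u1 t i)) (fun i => v (u2 t i)) k c)
                * (∑ a, Ih a k * ∑ b, Sh a b * fS (util t a) (util t b) c))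
            + ((Sum.elim (fun i => v (u1 t i)) (fun i => v (u2 t i)) k c)
                * (∑ a, Ih a k * ∑ b, Bh a b * g b c))) := by
      intro k c
      rw [hwdu k c]
      ring
    simp only [h1]
    simp only [Finset.sum_neg_distrib, Finset.sum_add_distrib, ← Finset.mul_sum]
  rw [hstep2]
  -- ## step 3 : exchange sums to express everything through vtil
  have hswap1 : (∑ k : Fin (N + 1) ⊕ Fin (N + 1), ∑ c,
          (Sum.elim (fun i => v (u1 t i)) (fun i => v (u2 t i)) k c)
            * (∑ a, Ih a k * ∑ b, Sh a b * fS (util t a) (util t b) c))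
      = ∑ a, ∑ b, Sh a b * ∑ c, vtil t a c * fS (util t a) (util t b) c := by
    rw [swap_helper_aux (fun a k => Ih a k)
      (fun k c => Sum.elim (fun i => v (u1 t i)) (fun i => v (u2 t i)) k c)
      (fun a c => ∑ b, Sh a b * fS (util t a) (util t b) c)]
    refine Finset.sum_congr rfl fun a _ => ?_
    have hv : ∀ c, (∑ k, Ih a k * Sum.elim (fun i => v (u1 t i)) (fun i => v (u2 t i)) k c)
        = vtil t a c := fun c => (hvtil t a c).symm
    simp only [hv]
    exact swap2_aux _ _ _
  have hswap2 : (∑ k : Fin (N + 1) ⊕ Fin (N + 1), ∑ c,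
          (Sum.elim (fun i => v (u1 t i)) (fun i => v (u2 t i)) k c)
            * (∑ a, Ih a k * ∑ b, Bh a b * g b c))
      = ∑ a, ∑ b, Bh a b * ∑ c, vtil t a c * g b c := by
    rw [swap_helper_aux (fun a k => Ih a k)
      (fun k c => Sum.elim (fun i => v (u1 t i)) (fun i => v (u2 t i)) k c)
      (fun a c => ∑ b, Bh a b * g b c)]
    refine Finset.sum_congr rfl fun a _ => ?_
    have hv : ∀ c, (∑ k, Ih a k * Sum.elim (fun i => v (u1 t i)) (fun i => v (u2 t i)) k c)
        = vtil t a c := fun c => (hvtil t a c).symm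
    simp only [hv]
    exact swap2_aux _ _ _
  rw [hswap1, hswap2]
  -- ## step 4 : the entropy conservation identity for the volume terms
  have hvv : ∀ a, v (util t a) = vtil t a := fun a => by rw [hutil]; exact hvu _
  have hpair : ∀ a b, Sh a b * (∑ c, vtil t a c * fS (util t a) (util t b) c)
      + Sh b a * (∑ c, vtil t b c * fS (util t b) (util t a) c)
      = Sh a b * (ψ (util t a) - ψ (util t b)) := by
    intro a b
    have he' : (∑ c, vtil t a c * fS (util t a) (util t b) c)
        - (∑ c, vtil t b c * fS (util t a) (util t b) c)
        = ψ (util t a) - ψ (util t b) := by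
      have h0 := hec (util t a) (util t b)
      rw [hvv, hvv] at h0
      simpa [dotProduct, Pi.sub_apply, sub_mul, Finset.sum_sub_distrib] using h0
    rw [hskew a b, hsym (util t b) (util t a), ← he']
    ring
  have hcomm : (∑ a, ∑ b, Sh a b * ∑ c, vtil t a c * fS (util t a) (util t b) c)
      = ∑ a, ∑ b, Sh b a * ∑ c, vtil t b c * fS (util t b) (util t a) c := Finset.sum_comm
  have hTT : (∑ a, ∑ b, Sh a b * ∑ c, vtil t a c * fS (util t a) (util t b) c)
        + (∑ a, ∑ b, Sh a b * ∑ c, vtil t a c * fS (util t a) (util t b) c)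
      = ∑ a, ∑ b, Sh a b * (ψ (util t a) - ψ (util t b)) := by
    nth_rewrite 2 [hcomm]
    rw [← Finset.sum_add_distrib]
    refine Finset.sum_congr rfl fun a _ => ?_
    rw [← Finset.sum_add_distrib]
    exact Finset.sum_congr rfl fun b _ => hpair a b
  have hcol : ∀ b, (∑ a, Sh a b) = -∑ a, Sh b a := fun b => by
    rw [← Finset.sum_neg_distrib]
    exact Finset.sum_congr rfl fun a _ => hskew b a
  have hA : (∑ a, ∑ b, Sh a b * ψ (util t a)) = ∑ a, (∑ b, Sh a b) * ψ (util t a) :=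
    Finset.sum_congr rfl fun a _ => (Finset.sum_mul _ _ _).symm
  have hB2 : (∑ a, ∑ b, Sh a b * ψ (util t b)) = -∑ a, (∑ b, Sh a b) * ψ (util t a) := by
    rw [Finset.sum_comm, ← Finset.sum_neg_distrib]
    refine Finset.sum_congr rfl fun b _ => ?_
    rw [← Finset.sum_mul, hcol b]
    ring
  have hpsi : (∑ a, ∑ b, Sh a b * (ψ (util t a) - ψ (util t b)))
      = 2 * ∑ a, (∑ b, Sh a b) * ψ (util t a) := by
    have h3 : ∀ (a b : (Fin (N + 1) ⊕ Fin 2) ⊕ (Fin (N + 1) ⊕ Fin 2)),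
        Sh a b * (ψ (util t a) - ψ (util t b))
        = Sh a b * ψ (util t a) - Sh a b * ψ (util t b) := fun a b => by ring
    simp only [h3, Finset.sum_sub_distrib]
    rw [hA, hB2]
    ring
  -- ## step 5 : evaluate the row-sum weighted entropy potential
  have hR1 : (∑ a, (∑ b, Sh a b) * ψ (util t a))
      = 1 / 2 * ψ (util t (Sum.inl (Sum.inr 0))) - 1 / 2 * ψ (util t (Sum.inr (Sum.inr 1))) := by
    rw [Fintype.sum_sum_type, Fintype.sum_sum_type, Fintype.sum_sum_type]
    simp only [hrow1, hrow2, hrow3, hrow4, zero_mul, Finset.sum_const_zero, add_zero, zero_add]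
    rw [Fin.sum_univ_two, Fin.sum_univ_two]
    simp [heL, heR]
    ring
  -- ## step 6 : evaluate the boundary terms
  have hT2 : (∑ a, ∑ b, Bh a b * ∑ c, vtil t a c * g b c)
      = -(∑ c, vtil t (Sum.inl (Sum.inr 0)) c * fstarL c)
        + ∑ c, vtil t (Sum.inr (Sum.inr 1)) c * fstarR c := by
    simp only [hBh, hg, Fintype.sum_sum_type, Matrix.fromBlocks_apply₁₁,
      Matrix.fromBlocks_apply₁₂, Matrix.fromBlocks_apply₂₁, Matrix.fromBlocks_apply₂₂,
      Matrix.zero_apply, Matrix.neg_apply, Matrix.vecMulVec_apply, zero_mul,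
      Finset.sum_const_zero, add_zero, zero_add, Sum.elim_inl, Sum.elim_inr,
      ite_apply, Pi.zero_apply, Fin.sum_univ_two]
    simp [heL, heR, mul_comm]
  -- ## step 7 : the face values of vtil
  have hvtL : ∀ c, vtil t (Sum.inl (Sum.inr 0)) c = ∑ j, Vf 0 j * v (u1 t j) c := by
    intro c
    rw [hvtil, Fintype.sum_sum_type]
    simp [hIh, Matrix.fromRows_apply_inr]
  have hvtR : ∀ c, vtil t (Sum.inr (Sum.inr 1)) c = ∑ j, Vf 1 j * v (u2 t j) c := by
    intro c
    rw [hvtil, Fintype.sum_sum_type]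
    simp [hIh, Matrix.fromRows_apply_inr]
  have hψL : ψ (util t (Sum.inl (Sum.inr 0)))
      = ψ (uu fun c => ∑ j, Vf 0 j * v (u1 t j) c) := by
    rw [hutil, show vtil t (Sum.inl (Sum.inr 0)) = fun c => ∑ j, Vf 0 j * v (u1 t j) c
      from funext hvtL]
  have hψR : ψ (util t (Sum.inr (Sum.inr 1)))
      = ψ (uu fun c => ∑ j, Vf 1 j * v (u2 t j) c) := by
    rw [hutil, show vtil t (Sum.inr (Sum.inr 1)) = fun c => ∑ j, Vf 1 j * v (u2 t j) c
      from funext hvtR]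
  -- ## step 8 : conclude
  have hT1val : (∑ a, ∑ b, Sh a b * ∑ c, vtil t a c * fS (util t a) (util t b) c)
      = 1 / 2 * ψ (util t (Sum.inl (Sum.inr 0)))
        - 1 / 2 * ψ (util t (Sum.inr (Sum.inr 1))) := by
    have h4 := hTT
    rw [hpsi, hR1] at h4
    linarith
  rw [hT1val, hT2, hψL, hψR]
  have hL := hbcL t
  have hR := hbcR t
  simp only [dotProduct] at hL hR
  have hfL : (∑ c, vtil t (Sum.inl (Sum.inr 0)) c * fstarL c)
      = ∑ c, (∑ j, Vf 0 j * v (u1 t j) c) * fstarL c :=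
    Finset.sum_congr rfl fun c _ => by rw [hvtL c]
  have hfR : (∑ c, vtil t (Sum.inr (Sum.inr 1)) c * fstarR c)
      = ∑ c, (∑ j, Vf 1 j * v (u2 t j) c) * fstarR c :=
    Finset.sum_congr rfl fun c _ => by rw [hvtR c]
  rw [hfL, hfR]
  linarith
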